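/- Let T be an out-tree with k ≥ 0 internal vertices (vertices of out-degree at least 1). Then T has a matching of size at least k/2. -/

import Mathlib

private lemma aux_matching {V : Type} [Fintype V] [DecidableEq V] :
    ∀ (n : ℕ) (A : Finset (V × V)), A.card ≤ n →
    (∀ v u u' : V, (u, v) ∈ A → (u', v) ∈ A → u = u') →
    (∀ v : V, ¬ Relation.TransGen (fun a b => (a, b) ∈ A) v v) →
    ∃ M : Finset (V × V), M ⊆ A ∧
      (∀ e ∈ M, ∀ f ∈ M, e ≠ f →
        e.1 ≠ f.1 ∧ e.1 ≠ f.2 ∧ e.2 ≠ f.1 ∧ e.2 ≠ f.2) ∧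
      (A.image Prod.fst).card ≤ 2 * M.card := by
  intro n
  induction n with
  | zero =>
    intro A hA _ _
    refine ⟨∅, Finset.empty_subset _, by simp, ?_⟩
    have : A = ∅ := Finset.card_eq_zero.mp (Nat.le_zero.mp hA)
    simp [this]
  | succ n ih =>
    intro A hA hindeg hacyc
    rcases Finset.eq_empty_or_nonempty A with rfl | hne
    · exact ⟨∅, Finset.empty_subset _, by simp, by simp⟩
    set R := fun a b : V => (a, b) ∈ A with hR
    set I := A.image Prod.fst with hI
    -- find a maximal internal vertex
    have hwf : WellFounded (fun a b : V => Relation.TransGen R b a) := by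
      haveI : IsTrans V (fun a b : V => Relation.TransGen R b a) :=
        ⟨fun a b c h1 h2 => h2.trans h1⟩
      haveI : IsIrrefl V (fun a b : V => Relation.TransGen R b a) := ⟨hacyc⟩
      exact Finite.wellFounded_of_trans_of_irrefl _
    have hIne : (I : Set V).Nonempty := by
      obtain ⟨e, he⟩ := hne
      exact ⟨e.1, Finset.mem_coe.mpr (Finset.mem_image_of_mem _ he)⟩
    obtain ⟨m0, hm0I, hmin0⟩ := hwf.has_min _ hIne
    obtain ⟨⟨m, w⟩, heA, hem⟩ := Finset.mem_image.mp (Finset.mem_coe.mp hm0I)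
    simp only at hem
    subst hem
    have hmin : ∀ x ∈ I, ¬ Relation.TransGen R m x := fun x hx => hmin0 x (Finset.mem_coe.mpr hx)
    -- children of m are leaves
    have hleaf : ∀ x, Relation.TransGen R m x → x ∉ I := fun x hx hxI => hmin x hxI hx
    have hwleaf : w ∉ I := hleaf w (Relation.TransGen.single heA)
    -- the smaller arc set
    set A' := A.filter (fun p => p.1 ≠ m ∧ p.2 ≠ m) with hA'
    have hsub : A' ⊆ A := Finset.filter_subset _ _
    have hcard : A'.card ≤ n := by
      have : A'.card < A.card := by
        apply Finset.card_lt_card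
        refine ⟨hsub, fun h => ?_⟩
        have := h heA
        simp [hA'] at this
      omega
    obtain ⟨M', hM'sub, hM'match, hM'count⟩ := ih A' hcard
      (fun v u u' hu hu' => hindeg v u u' (hsub hu) (hsub hu'))
      (fun v hv => hacyc v (Relation.TransGen.mono (fun a b h => hsub h) v v hv))
    have hkey : ∀ f ∈ M', f.1 ≠ m ∧ f.2 ≠ m ∧ f.1 ≠ w ∧ f.2 ≠ w := by
      intro f hf
      have hfA' := hM'sub hf
      have hfA : (f.1, f.2) ∈ A := by simpa using hsub hfA'
      obtain ⟨_, h1, h2⟩ := Finset.mem_filter.mp hfA'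
      refine ⟨h1, h2, ?_, ?_⟩
      · intro h
        apply hwleaf
        exact Finset.mem_image.mpr ⟨f, hsub hfA', h⟩
      · intro h
        exact h1 (hindeg w f.1 m (h ▸ hfA) heA)
    refine ⟨insert (m, w) M', ?_, ?_, ?_⟩
    · intro f hf
      rcases Finset.mem_insert.mp hf with rfl | hf
      · exact heA
      · exact hsub (hM'sub hf)
    · intro e he f hf hef
      rcases Finset.mem_insert.mp he with rfl | he <;>
        rcases Finset.mem_insert.mp hf with rfl | hf
      · exact absurd rfl hef
      · obtain ⟨h1, h2, h3, h4⟩ := hkey f hf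
        exact ⟨fun h => h1 h.symm, fun h => h2 h.symm, fun h => h3 h.symm, fun h => h4 h.symm⟩
      · obtain ⟨h1, h2, h3, h4⟩ := hkey e he
        exact ⟨h1, h3, h2, h4⟩
      · exact hM'match e he f hf hef
    · -- counting
      have hnotmem : (m, w) ∉ M' := by
        intro h
        have := Finset.mem_filter.mp (hM'sub h)
        simp at this
      rw [Finset.card_insert_of_notMem hnotmem]
      set I' := A'.image Prod.fst with hI'
      by_cases hp : ∃ u : V, (u, m) ∈ A
      · obtain ⟨p, hpA⟩ := hp
        have hIsub : I ⊆ insert m (insert p I') := by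
          intro u hu
          obtain ⟨f, hfA, hfu⟩ := Finset.mem_image.mp hu
          have hfA2 : (f.1, f.2) ∈ A := by simpa using hfA
          by_cases hum : u = m
          · simp [hum]
          · by_cases hxm : f.2 = m
            · have : u = p := hindeg m u p (by rw [← hfu, ← hxm]; exact hfA2) hpA
              simp [this]
            · have hf' : f ∈ A' := Finset.mem_filter.mpr ⟨hfA, hfu ▸ hum, hxm⟩
              exact Finset.mem_insert.mpr (Or.inr (Finset.mem_insert.mpr
                (Or.inr (Finset.mem_image.mpr ⟨f, hf', hfu⟩))))
        calc I.card ≤ (insert m (insert p I')).card := Finset.card_le_card hIsub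
          _ ≤ I'.card + 2 := by
              have h1 := Finset.card_insert_le m (insert p I')
              have h2 := Finset.card_insert_le p I'
              omega
          _ ≤ 2 * (M'.card + 1) := by omega
      · have hIsub : I ⊆ insert m I' := by
          intro u hu
          obtain ⟨f, hfA, hfu⟩ := Finset.mem_image.mp hu
          have hfA2 : (f.1, f.2) ∈ A := by simpa using hfA
          by_cases hum : u = m
          · simp [hum]
          · by_cases hxm : f.2 = m
            · exact absurd ⟨u, by rw [← hfu, ← hxm]; exact hfA2⟩ hp
            · have hf' : f ∈ A' := Finset.mem_filter.mpr ⟨hfA, hfu ▸ hum, hxm⟩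
              exact Finset.mem_insert.mpr (Or.inr (Finset.mem_image.mpr ⟨f, hf', hfu⟩))
        calc I.card ≤ (insert m I').card := Finset.card_le_card hIsub
          _ ≤ I'.card + 1 := Finset.card_insert_le _ _
          _ ≤ 2 * (M'.card + 1) := by omega

theorem stmt_0 {V : Type} [Fintype V] (A : Finset (V × V)) (r : V)
    (hroot : ∀ u : V, (u, r) ∉ A)
    (hindeg : ∀ v : V, v ≠ r → ∃! u : V, (u, v) ∈ A)
    (hreach : ∀ v : V, Relation.ReflTransGen (fun a b => (a, b) ∈ A) r v)
    (k : ℕ) (hk : k = Nat.card {v : V // ∃ w : V, (v, w) ∈ A}) :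
    ∃ M : Finset (V × V), M ⊆ A ∧
      (∀ e ∈ M, ∀ f ∈ M, e ≠ f →
        e.1 ≠ f.1 ∧ e.1 ≠ f.2 ∧ e.2 ≠ f.1 ∧ e.2 ≠ f.2) ∧
      k ≤ 2 * M.card := by
  classical
  set R := fun a b : V => (a, b) ∈ A with hR
  have huniq : ∀ v u u' : V, (u, v) ∈ A → (u', v) ∈ A → u = u' := by
    intro v u u' hu hu'
    have hv : v ≠ r := fun h => hroot u (h ▸ hu)
    obtain ⟨u₀, _, hu₀⟩ := hindeg v hv
    rw [hu₀ u hu, hu₀ u' hu']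
  have hacyc : ∀ v : V, ¬ Relation.TransGen R v v := by
    have key : ∀ v : V, Relation.ReflTransGen R r v → ¬ Relation.TransGen R v v := by
      intro v h
      induction h with
      | refl =>
        intro hc
        obtain ⟨p, _, hp2⟩ := Relation.TransGen.tail'_iff.mp hc
        exact hroot p hp2
      | tail h1 h2 ih =>
        rename_i u v
        intro hc
        obtain ⟨p, hp1, hp2⟩ := Relation.TransGen.tail'_iff.mp hc
        have : p = u := huniq v p u hp2 h2
        subst this
        exact ih (Relation.TransGen.head' h2 hp1)
    exact fun v => key v (hreach v)
  obtain ⟨M, hMsub, hMmatch, hMcount⟩ := aux_matching A.card A le_rfl huniq hacyc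
  refine ⟨M, hMsub, hMmatch, ?_⟩
  have hkeq : k = (A.image Prod.fst).card := by
    rw [hk, Nat.card_eq_fintype_card, ← Fintype.card_coe (A.image Prod.fst)]
    apply Fintype.card_congr
    apply Equiv.subtypeEquivRight
    intro v
    simp only [Finset.mem_image, Prod.exists]
    constructor
    · rintro ⟨w, hw⟩; exact ⟨v, w, hw, rfl⟩
    · rintro ⟨a, b, hab, rfl⟩; exact ⟨b, hab⟩
  omega
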